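/- Simultaneous shift of μ and ν by a dual vector: for every m_d ∈ Λ_d* one has Φ_{μ+m_d,ν+m_d}(τ,u,v,{d_r}) = e^{2πi B(m_d,u)} · Φ_{μ,ν}(τ, u, v+m_d τ, {d_r}). -/
import Mathlib


open scoped BigOperators Real
open Complex

/-- The complex bilinear form `B(x,y) = xᵀ 𝐀 y` attached to an integer matrix `𝐀`,
extended bilinearly to `ℂ^N`. -/
noncomputable def bilC {N : ℕ} (A : Matrix (Fin N) (Fin N) ℤ) (x y : Fin N → ℂ) : ℂ :=
  ∑ i, ∑ j, x i * (A i j : ℂ) * y j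

/-- The real bilinear form `B(x,y) = xᵀ 𝐀 y`. -/
noncomputable def bilR {N : ℕ} (A : Matrix (Fin N) (Fin N) ℤ) (x y : Fin N → ℝ) : ℝ :=
  ∑ i, ∑ j, x i * (A i j : ℝ) * y j

/-- The generalized Appell function `Φ_{μ,ν}(τ,u,v,{d_r})`:
`e^{2πi B(ν,u)} · Σ_{k ∈ ℤ^N} e^{πiτ Q(k+μ−ν) + 2πiτ B(ν,k+μ−ν) + 2πi B(v,k+μ−ν)}
  / ∏_{r=1}^M (1 − e^{2πi B(d_r,u)} e^{2πiτ B(d_r,k+μ−ν)})`. -/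
noncomputable def appellPhi {N M : ℕ} (A : Matrix (Fin N) (Fin N) ℤ)
    (d : Fin M → Fin N → ℤ) (τ : ℂ) (u v : Fin N → ℂ) (μ ν : Fin N → ℝ) : ℂ :=
  Complex.exp (2 * (π : ℂ) * I * bilC A (fun i => (ν i : ℂ)) u) *
  ∑' k : Fin N → ℤ,
    Complex.exp ((π : ℂ) * I * τ *
        bilC A (fun i => (k i : ℂ) + (μ i : ℂ) - (ν i : ℂ))
               (fun i => (k i : ℂ) + (μ i : ℂ) - (ν i : ℂ))
      + 2 * (π : ℂ) * I * τ *
        bilC A (fun i => (ν i : ℂ)) (fun i => (k i : ℂ) + (μ i : ℂ) - (ν i : ℂ))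
      + 2 * (π : ℂ) * I *
        bilC A v (fun i => (k i : ℂ) + (μ i : ℂ) - (ν i : ℂ))) /
    ∏ r, (1 - Complex.exp (2 * (π : ℂ) * I * bilC A (fun i => (d r i : ℂ)) u) *
      Complex.exp (2 * (π : ℂ) * I * τ *
        bilC A (fun i => (d r i : ℂ)) (fun i => (k i : ℂ) + (μ i : ℂ) - (ν i : ℂ))))

lemma bilC_add_left {N : ℕ} (A : Matrix (Fin N) (Fin N) ℤ) (x y z : Fin N → ℂ) :
    bilC A (fun i => x i + y i) z = bilC A x z + bilC A y z := by
  simp [bilC, add_mul, Finset.sum_add_distrib]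

lemma bilC_add_right {N : ℕ} (A : Matrix (Fin N) (Fin N) ℤ) (x y z : Fin N → ℂ) :
    bilC A x (fun i => y i + z i) = bilC A x y + bilC A x z := by
  simp [bilC, mul_add, Finset.sum_add_distrib]

lemma bilC_mul_right {N : ℕ} (A : Matrix (Fin N) (Fin N) ℤ) (x y : Fin N → ℂ) (c : ℂ) :
    bilC A x (fun i => y i * c) = bilC A x y * c := by
  simp only [bilC, Finset.sum_mul]
  refine Finset.sum_congr rfl fun i _ => ?_
  exact Finset.sum_congr rfl fun j _ => by ring

/-- Simultaneous shift of `μ` and `ν` by a dual vector `m_d ∈ Λ_d*`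
(an element of the ℝ-span of `d_1,…,d_M` with `B(d_r,m_d) ∈ ℤ` for all `r`):
`Φ_{μ+m_d,ν+m_d}(τ,u,v,{d_r}) = e^{2πi B(m_d,u)} · Φ_{μ,ν}(τ, u, v+m_d τ, {d_r})`. -/
theorem appellPhi_simultaneous_shift
    {N M : ℕ} (hN : 1 ≤ N) (hM : 1 ≤ M) (hMN : M ≤ N)
    (A : Matrix (Fin N) (Fin N) ℤ) (hAsymm : A.IsSymm)
    (hApos : (A.map ((↑) : ℤ → ℝ)).PosDef)
    (d : Fin M → Fin N → ℤ)
    (hd : LinearIndependent ℝ (fun r => fun i => (d r i : ℝ)))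
    (τ : ℂ) (hτ : 0 < τ.im) (u v : Fin N → ℂ)
    (μ ν : Fin N → ℝ)
    (hν : ν ∈ Submodule.span ℝ (Set.range (fun r => fun i => (d r i : ℝ))))
    (md : Fin N → ℝ)
    (hmd_span : md ∈ Submodule.span ℝ (Set.range (fun r => fun i => (d r i : ℝ))))
    (hmd_int : ∀ r : Fin M, ∃ z : ℤ, bilR A (fun i => (d r i : ℝ)) md = (z : ℝ)) :
    appellPhi A d τ u v (fun i => μ i + md i) (fun i => ν i + md i) =
      Complex.exp (2 * (π : ℂ) * I * bilC A (fun i => (md i : ℂ)) u) *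
        appellPhi A d τ u (fun i => v i + (md i : ℂ) * τ) μ ν := by
  have hw : ∀ k : Fin N → ℤ,
      (fun i => (k i : ℂ) + ((μ i + md i : ℝ) : ℂ) - ((ν i + md i : ℝ) : ℂ)) =
      (fun i => (k i : ℂ) + (μ i : ℂ) - (ν i : ℂ)) := by
    intro k; funext i; push_cast; ring
  have hν' : (fun i => ((ν i + md i : ℝ) : ℂ)) =
      (fun i => (ν i : ℂ) + (md i : ℂ)) := by
    funext i; push_cast; ring
  unfold appellPhi
  simp only [hw, hν']
  rw [← mul_assoc, ← Complex.exp_add, bilC_add_left]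
  congr 1
  · congr 1; ring
  · refine tsum_congr fun k => ?_
    set w : Fin N → ℂ := fun i => (k i : ℂ) + (μ i : ℂ) - (ν i : ℂ) with hwdef
    have hmdτ : bilC A (fun i => v i + (md i : ℂ) * τ) w =
        bilC A v w + bilC A (fun i => (md i : ℂ)) w * τ := by
      rw [bilC_add_left]
      congr 1
      simp only [bilC, Finset.sum_mul]
      refine Finset.sum_congr rfl fun i _ => ?_
      exact Finset.sum_congr rfl fun j _ => by ring
    have he : (π : ℂ) * I * τ * bilC A w w
          + 2 * (π : ℂ) * I * τ * bilC A (fun i => (ν i : ℂ) + (md i : ℂ)) w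
          + 2 * (π : ℂ) * I * bilC A v w
        = (π : ℂ) * I * τ * bilC A w w
          + 2 * (π : ℂ) * I * τ * bilC A (fun i => (ν i : ℂ)) w
          + 2 * (π : ℂ) * I * bilC A (fun i => v i + (md i : ℂ) * τ) w := by
      rw [bilC_add_left, hmdτ]
      ring
    rw [he]
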